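/- Let $E$ be a real inner product space of dimension $3$ and let $T : E \to E$ be a symmetric linear endomorphism with $\operatorname{trace}(T) = 0$. Let $\mu$ denote the smallest eigenvalue of $T$. Then $\operatorname{trace}(T \circ T) \le 6\,\mu^2$. -/

import Mathlib

open LinearMap Module

/-- Arithmetic core: if `a + b + c = 0` and `μ ≤ a, b, c`, then
`a² + b² + c² ≤ 6 μ²`. -/
lemma arith_trace_sq (a b c μ : ℝ) (h : a + b + c = 0) (ha : μ ≤ a)
    (hb : μ ≤ b) (hc : μ ≤ c) : a ^ 2 + b ^ 2 + c ^ 2 ≤ 6 * μ ^ 2 := by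
  nlinarith [mul_nonneg (sub_nonneg.2 ha) (sub_nonneg.2 hb),
    mul_nonneg (sub_nonneg.2 ha) (sub_nonneg.2 hc),
    mul_nonneg (sub_nonneg.2 hb) (sub_nonneg.2 hc)]

/-- For a traceless symmetric endomorphism `T` of a 3-dimensional real inner
product space with smallest eigenvalue `μ`, one has `trace (T ∘ T) ≤ 6 μ²`. -/
theorem trace_sq_le_six_min_eigenvalue_sq
    {E : Type*} [NormedAddCommGroup E] [InnerProductSpace ℝ E]
    [FiniteDimensional ℝ E] (hdim : Module.finrank ℝ E = 3)
    (T : E →ₗ[ℝ] E) (hT : LinearMap.IsSymmetric T)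
    (htr : LinearMap.trace ℝ E T = 0)
    (μ : ℝ) (hμ : Module.End.HasEigenvalue T μ)
    (hmin : ∀ ν : ℝ, Module.End.HasEigenvalue T ν → μ ≤ ν) :
    LinearMap.trace ℝ E (T ∘ₗ T) ≤ 6 * μ ^ 2 := by
  set b := (hT.eigenvectorBasis hdim).toBasis with hb
  set lam := hT.eigenvalues hdim with hl
  have key : ∀ (S : E →ₗ[ℝ] E) (f : Fin 3 → ℝ), (∀ i, S (b i) = f i • b i) →
      LinearMap.trace ℝ E S = ∑ i, f i := by
    intro S f hS
    rw [LinearMap.trace_eq_matrix_trace ℝ b, Matrix.trace]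
    refine Finset.sum_congr rfl fun i _ => ?_
    simp [Matrix.diag, LinearMap.toMatrix_apply, hS i]
  have hTb : ∀ i, T (b i) = lam i • b i := by
    intro i
    simpa [hb, hl] using hT.apply_eigenvectorBasis hdim i
  have h1 : LinearMap.trace ℝ E T = ∑ i, lam i := key T lam hTb
  have h2 : LinearMap.trace ℝ E (T ∘ₗ T) = ∑ i, (lam i) ^ 2 := by
    refine key (T ∘ₗ T) (fun i => (lam i) ^ 2) fun i => ?_
    simp [LinearMap.comp_apply, hTb i, smul_smul, sq]
  have hle : ∀ i, μ ≤ lam i := fun i => hmin _ (hT.hasEigenvalue_eigenvalues hdim i)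
  rw [h2]
  rw [h1] at htr
  rw [Fin.sum_univ_three] at htr ⊢
  exact arith_trace_sq _ _ _ μ htr (hle 0) (hle 1) (hle 2)
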